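/- Let (δ_s,𝒢) be an ICSIE instance with n messages and m receivers, let e ∈ [n] be a message wanted by a receiver R_j with f(j) = {e}, and let t ∈ [m], t ≠ j, be a receiver with e ∈ 𝒳_t. Let (δ_s′,𝒢′) be the instance with n+1 messages and m+1 receivers obtained from (δ_s,𝒢) by: adding a new message indexed n+1; adding a new receiver R_{m+1} with side information set 𝒳_j, wanted set {n+1}, and error resistance capability δ_s^(j); and replacing 𝒳_t by (𝒳_t \ {e}) ∪ {n+1} (all other data unchanged). If F : F_q^n → F_q^N is a valid (δ_s,𝒢)-ICSIE encoding, then F′ : F_q^{n+1} → F_q^{N+1} defined by F′(X) = (F(X_{[n]}), X_e + X_{n+1}) is a valid (δ_s′,𝒢′)-ICSIE encoding. -/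

import Mathlib

open Finset

/-- Restriction of a vector to the coordinates in a finite index set. -/
def proj {ι 𝔽 : Type*} (A : Finset ι) (x : ι → 𝔽) : {a // a ∈ A} → 𝔽 :=
  fun a => x a.1

/-- `enc` is a valid (δ,𝒢)-ICSIE encoding: decoders exist recovering the wanted
messages from the codeword and side information with at most `δ r` errors. -/
def ValidEnc (𝔽 : Type*) [DecidableEq 𝔽] {ι R C : Type*}
    (X f : R → Finset ι) (δ : R → ℕ) (enc : (ι → 𝔽) → C) : Prop :=
  ∃ D : (r : R) → C → ({a // a ∈ X r} → 𝔽) → ({a // a ∈ f r} → 𝔽),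
    ∀ (r : R) (x : ι → 𝔽) (xt : {a // a ∈ X r} → 𝔽),
      hammingDist (proj (X r) x) xt ≤ δ r → D r (enc x) xt = proj (f r) x

lemma ham_le_of_inj {𝔽 ι κ : Type*} [DecidableEq 𝔽] [Fintype ι] [Fintype κ]
    (u v : ι → 𝔽) (u' v' : κ → 𝔽) (φ : ι → κ) (hφ : Function.Injective φ)
    (h : ∀ i, u i ≠ v i → u' (φ i) ≠ v' (φ i)) :
    hammingDist u v ≤ hammingDist u' v' := by
  classical
  simp only [hammingDist]
  apply Finset.card_le_card_of_injOn φ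
  · intro i hi
    simp only [mem_coe, mem_filter, mem_univ, true_and] at hi ⊢
    exact h i hi
  · intro a _ b _ hab
    exact hφ hab

theorem valid_after_link_duplication
    {𝔽 : Type*} [Field 𝔽] [Fintype 𝔽] [DecidableEq 𝔽]
    {n m N : ℕ} (X f : Fin m → Finset (Fin n)) (δ : Fin m → ℕ)
    (hdisj : ∀ i, Disjoint (f i) (X i))
    (e : Fin n) (j t : Fin m) (hfj : f j = {e}) (hjt : t ≠ j) (het : e ∈ X t)
    (F : (Fin n → 𝔽) → (Fin N → 𝔽)) (hF : ValidEnc 𝔽 X f δ F) :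
    ValidEnc 𝔽
      (Fin.snoc
        (fun i : Fin m =>
          if i = t then ((X t).erase e).image Fin.castSucc ∪ {Fin.last n}
          else (X i).image Fin.castSucc)
        ((X j).image Fin.castSucc : Finset (Fin (n + 1))))
      (Fin.snoc (fun i : Fin m => (f i).image Fin.castSucc)
        ({Fin.last n} : Finset (Fin (n + 1))))
      (Fin.snoc δ (δ j))
      (fun x : Fin (n + 1) → 𝔽 =>
        (Fin.snoc (F fun i : Fin n => x i.castSucc)
          (x e.castSucc + x (Fin.last n)) : Fin (N + 1) → 𝔽)) := by
  classical
  obtain ⟨D, hD⟩ := hF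
  set S : Fin (m + 1) → Finset (Fin (n + 1)) := Fin.snoc
    (fun i : Fin m =>
      if i = t then ((X t).erase e).image Fin.castSucc ∪ {Fin.last n}
      else (X i).image Fin.castSucc)
    ((X j).image Fin.castSucc) with hSdef
  set W : Fin (m + 1) → Finset (Fin (n + 1)) := Fin.snoc
    (fun i : Fin m => (f i).image Fin.castSucc) {Fin.last n} with hWdef
  set d : Fin (m + 1) → ℕ := Fin.snoc δ (δ j) with hddef
  have hSc : ∀ i : Fin m, S i.castSucc =
      if i = t then ((X t).erase e).image Fin.castSucc ∪ {Fin.last n}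
      else (X i).image Fin.castSucc := fun i => Fin.snoc_castSucc _ _ i
  have hSl : S (Fin.last m) = (X j).image Fin.castSucc := Fin.snoc_last _ _
  have hWc : ∀ i : Fin m, W i.castSucc = (f i).image Fin.castSucc :=
    fun i => Fin.snoc_castSucc _ _ i
  have hWl : W (Fin.last m) = {Fin.last n} := Fin.snoc_last _ _
  have hdc : ∀ i : Fin m, d i.castSucc = δ i := fun i => Fin.snoc_castSucc _ _ i
  have hdl : d (Fin.last m) = δ j := Fin.snoc_last _ _
  have hmemlast : ∀ i : Fin m, i = t → Fin.last n ∈ S i.castSucc := by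
    intro i hit
    rw [hSc, if_pos hit]
    exact Finset.mem_union_right _ (Finset.mem_singleton_self _)
  have hmemcs : ∀ (i : Fin m) (b : Fin n), b ∈ X i → ¬(b = e ∧ i = t) →
      b.castSucc ∈ S i.castSucc := by
    intro i b hb hbe
    rw [hSc]
    by_cases hit : i = t
    · rw [if_pos hit]
      exact Finset.mem_union_left _ (Finset.mem_image_of_mem _
        (Finset.mem_erase.2 ⟨fun h => hbe ⟨h, hit⟩, hit ▸ hb⟩))
    · rw [if_neg hit]
      exact Finset.mem_image_of_mem _ hb
  have hmemj : ∀ b : Fin n, b ∈ X j → b.castSucc ∈ S (Fin.last m) := by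
    intro b hb
    rw [hSl]
    exact Finset.mem_image_of_mem _ hb
  refine ⟨fun r => Fin.lastCases
    (fun c xt => fun a => c (Fin.last N) - D j (fun s => c s.castSucc)
      (fun b => xt ⟨b.1.castSucc, hmemj b.1 b.2⟩) ⟨e, by simp [hfj]⟩)
    (fun i c xt => fun a => (Fin.snoc (fun k : Fin n =>
      if hk : k ∈ f i then
        D i (fun s => c s.castSucc)
          (fun b => if hbe : b.1 = e ∧ i = t then
              c (Fin.last N) - xt ⟨Fin.last n, hmemlast i hbe.2⟩
            else xt ⟨b.1.castSucc, hmemcs i b.1 b.2 hbe⟩)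
          ⟨k, hk⟩
      else 0) 0 : Fin (n + 1) → 𝔽) a.1)
    r, ?_⟩
  intro r x xt hdist
  set y : Fin n → 𝔽 := fun i : Fin n => x i.castSucc with hy
  have hc : (fun s : Fin N =>
      (Fin.snoc (F y) (x e.castSucc + x (Fin.last n)) : Fin (N + 1) → 𝔽) s.castSucc)
      = F y := by
    funext s; simp
  induction r using Fin.lastCases with
  | last =>
    simp only [Fin.lastCases_last]
    have hdist' : hammingDist (proj (S (Fin.last m)) x) xt ≤ δ j := hdl ▸ hdist
    have key : D j (F y)
        (fun b : {a // a ∈ X j} => xt ⟨b.1.castSucc, hmemj b.1 b.2⟩) = proj (f j) y := by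
      apply hD
      refine le_trans (ham_le_of_inj _ _ (proj (S (Fin.last m)) x) xt
        (fun b => ⟨b.1.castSucc, hmemj b.1 b.2⟩) ?_ ?_) hdist'
      · intro a b hab
        exact Subtype.ext (Fin.castSucc_injective _ (congrArg Subtype.val hab))
      · intro b hb'
        exact hb'
    funext a
    have ha : a.1 = Fin.last n := by
      have h1 : a.1 ∈ ({Fin.last n} : Finset (Fin (n+1))) := by
        rw [← hWl]; exact a.2
      simpa using h1
    rw [hc, key]
    simp only [proj, Fin.snoc_last, hy, ha]
    ring
  | cast i =>
    simp only [Fin.lastCases_castSucc]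
    have hdist' : hammingDist (proj (S i.castSucc) x) xt ≤ δ i := (hdc i) ▸ hdist
    set xtil : {b // b ∈ X i} → 𝔽 := fun b => if hbe : b.1 = e ∧ i = t then
        (Fin.snoc (F y) (x e.castSucc + x (Fin.last n)) : Fin (N + 1) → 𝔽) (Fin.last N)
          - xt ⟨Fin.last n, hmemlast i hbe.2⟩
      else xt ⟨b.1.castSucc, hmemcs i b.1 b.2 hbe⟩ with hxtil
    have key : D i (F y) xtil = proj (f i) y := by
      apply hD
      refine le_trans (ham_le_of_inj _ _ (proj (S i.castSucc) x) xt
        (fun b => if hbe : b.1 = e ∧ i = t then ⟨Fin.last n, hmemlast i hbe.2⟩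
          else ⟨b.1.castSucc, hmemcs i b.1 b.2 hbe⟩) ?_ ?_) hdist'
      · intro a b hab
        dsimp only at hab
        by_cases ha' : a.1 = e ∧ i = t <;> by_cases hb' : b.1 = e ∧ i = t
        · rw [dif_pos ha', dif_pos hb'] at hab
          exact Subtype.ext (ha'.1.trans hb'.1.symm)
        · rw [dif_pos ha', dif_neg hb'] at hab
          exact absurd (congrArg Subtype.val hab).symm (Fin.castSucc_lt_last b.1).ne
        · rw [dif_neg ha', dif_pos hb'] at hab
          exact absurd (congrArg Subtype.val hab) (Fin.castSucc_lt_last a.1).ne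
        · rw [dif_neg ha', dif_neg hb'] at hab
          exact Subtype.ext (Fin.castSucc_injective _ (congrArg Subtype.val hab))
      · intro b hb'
        by_cases hbe : b.1 = e ∧ i = t
        · rw [dif_pos hbe]
          simp only [hxtil, dif_pos hbe, proj, Fin.snoc_last] at hb' ⊢
          intro hxx
          apply hb'
          rw [← hxx, hbe.1, hy]
          ring
        · rw [dif_neg hbe]
          simp only [hxtil, dif_neg hbe, proj, hy] at hb' ⊢
          exact hb'
    funext a
    have ha : a.1 ∈ (f i).image Fin.castSucc := by
      rw [← hWc i]; exact a.2
    obtain ⟨k, hk, hka⟩ := Finset.mem_image.1 ha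
    simp only [proj]
    rw [← hka]
    simp only [Fin.snoc_castSucc]
    rw [dif_pos hk]
    have hfin := congrFun key ⟨k, hk⟩
    simp only [proj] at hfin
    exact hfin
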